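/- (Theorem C, algebraic form.) Let k ≥ 1 and let a ∈ ℝ[z₁,z₂] satisfy a(1,1) = 4. Then all formal partial derivatives D^{(n,m)} a with n + m < k vanish at each of the three points (−1,−1), (−1,1), (1,−1) (condition Z_k) if and only if there exist polynomials c_{α,β,γ} ∈ ℝ[z₁,z₂], one for each box spline symbol B#_{α,β,γ} in the set I_k, such that a = Σ_{B#_{α,β,γ} ∈ I_k} c_{α,β,γ} · 4 · B#_{α,β,γ} and Σ c_{α,β,γ}(1,1) = 1. -/

import Mathlib

open MvPolynomial

/-- The normalized three-directional box spline symbol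
`B#_{α,β,γ}(z₁,z₂) = ((1+z₁)/2)^α ((1+z₂)/2)^β ((1+z₁z₂)/2)^γ`. -/
noncomputable def Bs (α β γ : ℕ) : MvPolynomial (Fin 2) ℝ :=
  (C (1 / 2 : ℝ) * (1 + X 0)) ^ α * (C (1 / 2 : ℝ) * (1 + X 1)) ^ β *
    (C (1 / 2 : ℝ) * (1 + X 0 * X 1)) ^ γ

/-- The formal partial derivative `D^{(n,m)} = ∂^{n+m}/∂z₁^n ∂z₂^m`. -/
noncomputable def Dnm (n m : ℕ) : Module.End ℝ (MvPolynomial (Fin 2) ℝ) :=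
  ((pderiv (0 : Fin 2)).toLinearMap ^ n) * ((pderiv (1 : Fin 2)).toLinearMap ^ m)

/-- Triples `(α,β,γ)` indexing the generating set
`I_k = { B#_{β,β,α}, B#_{β,α,β}, B#_{α,β,β} : α = 0,…,⌊k/2⌋, β = k − α }`. -/
def inIk (k : ℕ) (t : ℕ × ℕ × ℕ) : Prop :=
  ∃ α : ℕ, α ≤ k / 2 ∧
    (t = (k - α, k - α, α) ∨ t = (k - α, α, k - α) ∨ t = (α, k - α, k - α))

/-! ### Auxiliary material -/

open Finsupp

section Aux

lemma coeff_pderiv (i : Fin 2) (d : Fin 2 →₀ ℕ) (f : MvPolynomial (Fin 2) ℝ) :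
    coeff d (pderiv i f) = (d i + 1 : ℝ) * coeff (d + single i 1) f := by
  induction f using MvPolynomial.induction_on' with
  | add p q hp hq => simp [hp, hq, mul_add]
  | monomial s a =>
    rw [pderiv_monomial, coeff_monomial, coeff_monomial]
    by_cases h : s = d + single i 1
    · have hsi : s i = d i + 1 := by simp [h]
      have hd : s - single i 1 = d := by
        rw [h]; ext j; by_cases hj : j = i <;> simp [hj, single_apply]
      rw [if_pos h, if_pos hd, hsi]; push_cast; ring
    · rw [if_neg h, mul_zero]
      by_cases hd : s - single i 1 = d
      · rw [if_pos hd]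
        have hsi : s i = 0 := by
          by_contra hne
          apply h
          have : s = (s - single i 1) + single i 1 := by
            ext j; by_cases hj : j = i
            · subst hj
              simp only [Finsupp.add_apply, Finsupp.tsub_apply, single_apply, if_pos rfl,
                if_true]
              omega
            · simp [single_apply, hj, Ne.symm hj]
          rw [this, hd]
        rw [hsi]; simp
      · rw [if_neg hd]

lemma coeff_pderiv_pow (i : Fin 2) (m : ℕ) (d : Fin 2 →₀ ℕ) (hd : d i = 0)
    (f : MvPolynomial (Fin 2) ℝ) :
    coeff d (((pderiv i).toLinearMap ^ m) f) =
      (m.factorial : ℝ) * coeff (d + single i m) f := by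
  induction m generalizing f with
  | zero => simp
  | succ m ih =>
    rw [pow_succ, Module.End.mul_apply, ih _,
      show ((pderiv i).toLinearMap f) = pderiv i f from rfl, coeff_pderiv]
    have h1 : (d + single i m) i = m := by simp [hd]
    have h2 : d + single i m + single i 1 = d + single i (m + 1) := by
      rw [add_assoc, ← Finsupp.single_add]
    rw [h1, h2, Nat.factorial_succ]
    push_cast; ring

lemma eval0_Dnm (n m : ℕ) (b : MvPolynomial (Fin 2) ℝ) :
    eval (fun _ => (0 : ℝ)) (Dnm n m b) =
      (n.factorial : ℝ) * m.factorial * coeff (single 0 n + single 1 m) b := by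
  have h : (fun _ => (0:ℝ)) = (0 : Fin 2 → ℝ) := rfl
  rw [Dnm, Module.End.mul_apply, h, eval_zero]
  rw [constantCoeff_eq]
  rw [coeff_pderiv_pow 0 n 0 rfl, zero_add]
  rw [coeff_pderiv_pow 1 m (single 0 n) (by simp), mul_assoc]

noncomputable abbrev I0 : Ideal (MvPolynomial (Fin 2) ℝ) := Ideal.span {X 0, X 1}

lemma mem_I0_pow_forward (k : ℕ) :
    ∀ b ∈ (I0 ^ k : Ideal (MvPolynomial (Fin 2) ℝ)),
      ∀ d : Fin 2 →₀ ℕ, d 0 + d 1 < k → coeff d b = 0 := by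
  induction k with
  | zero => intro b _ d hd; omega
  | succ k ih =>
    intro b hb
    rw [pow_succ] at hb
    refine Submodule.mul_induction_on hb ?_ ?_
    · intro m hm n hn
      obtain ⟨p, q, rfl⟩ := Ideal.mem_span_pair.mp hn
      intro d hd
      rw [mul_add, coeff_add]
      have key : ∀ (i : Fin 2) (r : MvPolynomial (Fin 2) ℝ),
          coeff d (m * (r * X i)) = 0 := by
        intro i r
        rw [show m * (r * X i) = (m * r) * X i by ring, coeff_mul_X']
        split
        · apply ih _ (Ideal.mul_mem_right r _ hm)
          rename_i hi
          rw [Finsupp.mem_support_iff] at hi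
          fin_cases i <;> simp_all [Finsupp.tsub_apply, Finsupp.single_apply, Fin.ext_iff] <;>
            omega
        · rfl
      rw [key 0 p, key 1 q, add_zero]
    · intro x y hx hy d hd; rw [coeff_add, hx d hd, hy d hd, add_zero]

lemma mem_I0_pow (k : ℕ) (b : MvPolynomial (Fin 2) ℝ) :
    b ∈ (I0 ^ k : Ideal (MvPolynomial (Fin 2) ℝ)) ↔
      ∀ d : Fin 2 →₀ ℕ, d 0 + d 1 < k → coeff d b = 0 := by
  constructor
  · exact mem_I0_pow_forward k b
  · intro h
    rw [b.as_sum]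
    apply Ideal.sum_mem
    intro d hd
    rw [MvPolynomial.mem_support_iff] at hd
    have hdeg : k ≤ d 0 + d 1 := by
      by_contra hc; exact hd (h d (by omega))
    have hmon : monomial d (coeff d b) = C (coeff d b) * (X 0 ^ d 0 * X 1 ^ d 1) := by
      rw [monomial_eq]
      congr 1
      rw [Finsupp.prod_fintype _ _ (fun i => pow_zero _), Fin.prod_univ_two]
    rw [hmon]
    apply Ideal.mul_mem_left
    have : X 0 ^ d 0 * X 1 ^ d 1 ∈ (I0 ^ (d 0 + d 1) : Ideal _) := by
      rw [pow_add]
      exact Ideal.mul_mem_mul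
        (Ideal.pow_mem_pow (Ideal.subset_span (by simp)) _)
        (Ideal.pow_mem_pow (Ideal.subset_span (by simp)) _)
    exact Ideal.pow_le_pow_right hdeg this

noncomputable def shift (p : Fin 2 → ℝ) :
    MvPolynomial (Fin 2) ℝ →ₐ[ℝ] MvPolynomial (Fin 2) ℝ :=
  aeval (fun i => X i + C (p i))

lemma shift_X (p : Fin 2 → ℝ) (i : Fin 2) : shift p (X i) = X i + C (p i) := by
  simp [shift]

lemma shift_neg_shift (p : Fin 2 → ℝ) (a : MvPolynomial (Fin 2) ℝ) :
    shift (-p) (shift p a) = a := by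
  have h : (shift (-p)).comp (shift p) = AlgHom.id ℝ _ := by
    apply algHom_ext
    intro i
    simp [shift]
  simpa using DFunLike.congr_fun h a

lemma eval_zero_shift (p : Fin 2 → ℝ) (a : MvPolynomial (Fin 2) ℝ) :
    eval (fun _ => (0:ℝ)) (shift p a) = eval p a := by
  induction a using MvPolynomial.induction_on with
  | C c => simp [shift]
  | add f g hf hg => simp only [map_add, hf, hg]
  | mul_X f i hf => simp only [map_mul, shift_X, map_add, hf, eval_X, eval_add, eval_C]; simp

lemma pderiv_shift (p : Fin 2 → ℝ) (i : Fin 2) (a : MvPolynomial (Fin 2) ℝ) :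
    pderiv i (shift p a) = shift p (pderiv i a) := by
  induction a using MvPolynomial.induction_on with
  | C c => simp [shift]
  | add f g hf hg => simp [map_add, hf, hg]
  | mul_X f j hf =>
    classical
    have hX : shift p (pderiv i (X j)) = pderiv i (X j) := by
      rw [pderiv_X]; by_cases h : i = j <;> simp [Pi.single_apply, h]
    simp only [map_mul, shift_X, pderiv_mul, map_add, pderiv_C, add_zero, hf, hX]

lemma pow_pderiv_shift (p : Fin 2 → ℝ) (i : Fin 2) (n : ℕ) (a : MvPolynomial (Fin 2) ℝ) :
    ((pderiv i).toLinearMap ^ n) (shift p a) = shift p (((pderiv i).toLinearMap ^ n) a) := by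
  induction n generalizing a with
  | zero => simp
  | succ n ih =>
    rw [pow_succ, Module.End.mul_apply, Module.End.mul_apply,
      show ((pderiv i).toLinearMap (shift p a)) = pderiv i (shift p a) from rfl,
      pderiv_shift, ih]
    rfl

lemma Dnm_shift (p : Fin 2 → ℝ) (n m : ℕ) (a : MvPolynomial (Fin 2) ℝ) :
    Dnm n m (shift p a) = shift p (Dnm n m a) := by
  rw [Dnm, Module.End.mul_apply, Module.End.mul_apply, pow_pderiv_shift, pow_pderiv_shift]

lemma fin2_finsupp_decomp (d : Fin 2 →₀ ℕ) : d = single 0 (d 0) + single 1 (d 1) := by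
  ext j
  fin_cases j <;> simp [single_apply]

lemma Zk_point (k : ℕ) (p : Fin 2 → ℝ) (a : MvPolynomial (Fin 2) ℝ) :
    (∀ n m : ℕ, n + m < k → eval p (Dnm n m a) = 0) ↔
      a ∈ (Ideal.span {X 0 - C (p 0), X 1 - C (p 1)} : Ideal (MvPolynomial (Fin 2) ℝ)) ^ k := by
  have hshiftC : ∀ (q : Fin 2 → ℝ) (c : ℝ), shift q (C c) = C c := by
    intro q c; simp [shift]
  have hgen : ∀ i : Fin 2, shift p (X i - C (p i)) = X i := by
    intro i; rw [map_sub, shift_X, hshiftC]; ring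
  have hmap : Ideal.map (shift p)
      ((Ideal.span {X 0 - C (p 0), X 1 - C (p 1)} : Ideal (MvPolynomial (Fin 2) ℝ)) ^ k)
      = I0 ^ k := by
    rw [Ideal.map_pow, Ideal.map_span]
    congr 2
    rw [Set.image_insert_eq, Set.image_singleton, hgen 0, hgen 1]
  have hmap' : Ideal.map (shift (-p)) ((I0 : Ideal (MvPolynomial (Fin 2) ℝ)) ^ k)
      ≤ (Ideal.span {X 0 - C (p 0), X 1 - C (p 1)} : Ideal (MvPolynomial (Fin 2) ℝ)) ^ k := by
    rw [Ideal.map_pow, Ideal.map_span, Set.image_insert_eq, Set.image_singleton]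
    have hg : ∀ i : Fin 2, shift (-p) (X i) = X i - C (p i) := by
      intro i; rw [shift_X]; simp [sub_eq_add_neg]
    rw [hg 0, hg 1]
  have key : (a ∈ (Ideal.span {X 0 - C (p 0), X 1 - C (p 1)} :
      Ideal (MvPolynomial (Fin 2) ℝ)) ^ k)
      ↔ shift p a ∈ (I0 ^ k : Ideal (MvPolynomial (Fin 2) ℝ)) := by
    constructor
    · intro h; rw [← hmap]; exact Ideal.mem_map_of_mem _ h
    · intro h
      have := hmap' (Ideal.mem_map_of_mem (shift (-p)) h)
      rwa [shift_neg_shift] at this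
  rw [key, mem_I0_pow]
  constructor
  · intro h d hd
    have h2 := h (d 0) (d 1) hd
    rw [← eval_zero_shift p, ← Dnm_shift, eval0_Dnm] at h2
    have hfac : ((d 0).factorial : ℝ) * (d 1).factorial ≠ 0 := by positivity
    rw [← fin2_finsupp_decomp] at h2
    exact (mul_eq_zero.mp h2).resolve_left hfac
  · intro h n m hnm
    rw [← eval_zero_shift p, ← Dnm_shift, eval0_Dnm]
    rw [h (single 0 n + single 1 m) (by simp [single_apply]; omega), mul_zero]

noncomputable abbrev pu : MvPolynomial (Fin 2) ℝ := 1 + X 0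
noncomputable abbrev pv : MvPolynomial (Fin 2) ℝ := 1 + X 1
noncomputable abbrev pw : MvPolynomial (Fin 2) ℝ := 1 + X 0 * X 1

lemma span_pair_pow {R : Type*} [CommRing R] (x y : R) (k : ℕ) :
    (Ideal.span {x, y}) ^ k =
      Ideal.span {p | ∃ i j, i + j = k ∧ p = x ^ i * y ^ j} := by
  induction k with
  | zero =>
    have : {p | ∃ i j, i + j = 0 ∧ p = x ^ i * y ^ j} = ({1} : Set R) := by
      ext p
      constructor
      · rintro ⟨i, j, hij, rfl⟩
        have hi : i = 0 := by omega
        have hj : j = 0 := by omega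
        simp [hi, hj]
      · rintro rfl; exact ⟨0, 0, rfl, by simp⟩
    rw [pow_zero, this, Ideal.span_singleton_one, Ideal.one_eq_top]
  | succ k ih =>
    rw [pow_succ, ih, Ideal.span_mul_span']
    apply le_antisymm
    · rw [Ideal.span_le]
      rintro p ⟨q, ⟨i, j, hij, rfl⟩, r, hr, rfl⟩
      rcases hr with rfl | rfl
      · exact Ideal.subset_span ⟨i + 1, j, by omega, by ring⟩
      · exact Ideal.subset_span ⟨i, j + 1, by omega, by ring⟩
    · rw [Ideal.span_le]
      rintro p ⟨i, j, hij, rfl⟩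
      rcases Nat.eq_zero_or_pos i with hi | hi
      · have hj : j = k + 1 := by omega
        subst hi hj
        exact Ideal.subset_span ⟨x ^ 0 * y ^ k, ⟨0, k, by omega, rfl⟩, y, by simp, by ring⟩
      · obtain ⟨i', rfl⟩ : ∃ i', i = i' + 1 := ⟨i - 1, by omega⟩
        exact Ideal.subset_span ⟨x ^ i' * y ^ j, ⟨i', j, by omega, rfl⟩, x, by simp, by ring⟩

lemma exists_gen (k i j l : ℕ) (h1 : k ≤ i + j) (h2 : k ≤ i + l) (h3 : k ≤ j + l) :
    ∃ α, α ≤ k / 2 ∧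
      ((k - α ≤ i ∧ k - α ≤ j ∧ α ≤ l) ∨ (k - α ≤ i ∧ α ≤ j ∧ k - α ≤ l) ∨
        (α ≤ i ∧ k - α ≤ j ∧ k - α ≤ l)) := by
  rcases Nat.le_total i j with h4 | h4 <;> rcases Nat.le_total j l with h5 | h5 <;>
      rcases Nat.le_total i l with h6 | h6 <;>
    first
      | exact ⟨k - i, by omega, by omega⟩
      | exact ⟨k - j, by omega, by omega⟩
      | exact ⟨k - l, by omega, by omega⟩

lemma mem_pair_pow_of_le {R : Type*} [CommRing R] {x y : R} {i j k : ℕ} (h : k ≤ i + j) :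
    x ^ i * y ^ j ∈ (Ideal.span {x, y}) ^ k := by
  apply Ideal.pow_le_pow_right h
  rw [pow_add]
  exact Ideal.mul_mem_mul
    (Ideal.pow_mem_pow (Ideal.subset_span (by simp)) _)
    (Ideal.pow_mem_pow (Ideal.subset_span (by simp)) _)

lemma two_eq_C2 : (2 : MvPolynomial (Fin 2) ℝ) = C (2 : ℝ) := by
  rw [map_ofNat]

lemma half_mul_two : (C (1/2 : ℝ) : MvPolynomial (Fin 2) ℝ) * 2 = 1 := by
  rw [two_eq_C2, ← map_mul, ← C_1]
  norm_num

lemma cop12 : IsCoprime (Ideal.span {pu, pv}) (Ideal.span {pu, pw}) := by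
  rw [Ideal.isCoprime_iff_exists]
  refine ⟨C (1/2 : ℝ) * pv, Ideal.mul_mem_left _ _ (Ideal.subset_span (by simp)),
    C (1/2 : ℝ) * (pw - X 1 * pu), ?_, ?_⟩
  · exact Ideal.mul_mem_left _ _ (Submodule.sub_mem _ (Ideal.subset_span (by simp))
      (Ideal.mul_mem_left _ _ (Ideal.subset_span (by simp))))
  · linear_combination half_mul_two

lemma cop13 : IsCoprime (Ideal.span {pu, pv}) (Ideal.span {pv, pw}) := by
  rw [Ideal.isCoprime_iff_exists]
  refine ⟨C (1/2 : ℝ) * pu, Ideal.mul_mem_left _ _ (Ideal.subset_span (by simp)),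
    C (1/2 : ℝ) * (pw - X 0 * pv), ?_, ?_⟩
  · exact Ideal.mul_mem_left _ _ (Submodule.sub_mem _ (Ideal.subset_span (by simp))
      (Ideal.mul_mem_left _ _ (Ideal.subset_span (by simp))))
  · linear_combination half_mul_two

lemma cop23 : IsCoprime (Ideal.span {pu, pw}) (Ideal.span {pv, pw}) := by
  rw [Ideal.isCoprime_iff_exists]
  refine ⟨C (1/2 : ℝ) * pu, Ideal.mul_mem_left _ _ (Ideal.subset_span (by simp)),
    C (1/2 : ℝ) * (pw - X 0 * pv), ?_, ?_⟩
  · exact Ideal.mul_mem_left _ _ (Submodule.sub_mem _ (Ideal.subset_span (by simp))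
      (Ideal.mul_mem_left _ _ (Ideal.subset_span (by simp))))
  · linear_combination half_mul_two

noncomputable def spanM (k : ℕ) : Ideal (MvPolynomial (Fin 2) ℝ) :=
  Ideal.span {p | ∃ i j l, k ≤ i + j ∧ k ≤ i + l ∧ k ≤ j + l ∧ p = pu ^ i * pv ^ j * pw ^ l}

lemma inter_eq_spanM (k : ℕ) :
    (Ideal.span {pu, pv}) ^ k ⊓ (Ideal.span {pu, pw}) ^ k ⊓ (Ideal.span {pv, pw}) ^ k
      = spanM k := by
  have hprod : (Ideal.span {pu, pv}) ^ k ⊓ (Ideal.span {pu, pw}) ^ k ⊓ (Ideal.span {pv, pw}) ^ k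
      = ((Ideal.span {pu, pv}) ^ k * (Ideal.span {pu, pw}) ^ k) * (Ideal.span {pv, pw}) ^ k := by
    rw [Ideal.inf_eq_mul_of_isCoprime (cop12.pow),
      Ideal.inf_eq_mul_of_isCoprime (IsCoprime.mul_left cop13.pow cop23.pow)]
  apply le_antisymm
  · rw [hprod, span_pair_pow, span_pair_pow, span_pair_pow, Ideal.span_mul_span',
      Ideal.span_mul_span', Ideal.span_le]
    rintro p ⟨pq, ⟨q, ⟨a, a', ha, rfl⟩, r, ⟨b, b', hb, rfl⟩, rfl⟩, z, ⟨c, c', hc, rfl⟩, rfl⟩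
    exact Ideal.subset_span ⟨a + b, a' + c, b' + c', by omega, by omega, by omega,
      by rw [pow_add, pow_add, pow_add]; ring⟩
  · rw [spanM, Ideal.span_le]
    rintro p ⟨i, j, l, h1, h2, h3, rfl⟩
    refine ⟨⟨?_, ?_⟩, ?_⟩
    · exact Ideal.mul_mem_right _ _ (mem_pair_pow_of_le h1)
    · rw [show pu ^ i * pv ^ j * pw ^ l = pu ^ i * pw ^ l * pv ^ j by ring]
      exact Ideal.mul_mem_right _ _ (mem_pair_pow_of_le h2)
    · rw [show pu ^ i * pv ^ j * pw ^ l = pv ^ j * pw ^ l * pu ^ i by ring]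
      exact Ideal.mul_mem_right _ _ (mem_pair_pow_of_le h3)

lemma e1 : Ideal.span {X 0 - C (-1 : ℝ), X 1 - C (-1 : ℝ)} = Ideal.span {pu, pv} := by
  have g0 : X 0 - C (-1 : ℝ) = pu := by rw [map_neg, map_one]; ring
  have g1 : X 1 - C (-1 : ℝ) = pv := by rw [map_neg, map_one]; ring
  rw [g0, g1]

lemma e2 : Ideal.span {X 0 - C (-1 : ℝ), X 1 - C (1 : ℝ)} = Ideal.span {pu, pw} := by
  apply le_antisymm <;> rw [Ideal.span_le]
  · rintro p (rfl | rfl)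
    · exact Ideal.mem_span_pair.mpr ⟨1, 0, by rw [map_neg, map_one]; ring⟩
    · exact Ideal.mem_span_pair.mpr ⟨X 1, -1, by rw [map_one]; ring⟩
  · rintro p (rfl | rfl)
    · exact Ideal.mem_span_pair.mpr ⟨1, 0, by rw [map_neg, map_one]; ring⟩
    · exact Ideal.mem_span_pair.mpr ⟨X 1, -1, by rw [map_neg, map_one]; ring⟩

lemma e3 : Ideal.span {X 0 - C (1 : ℝ), X 1 - C (-1 : ℝ)} = Ideal.span {pv, pw} := by
  apply le_antisymm <;> rw [Ideal.span_le]
  · rintro p (rfl | rfl)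
    · exact Ideal.mem_span_pair.mpr ⟨X 0, -1, by rw [map_one]; ring⟩
    · exact Ideal.mem_span_pair.mpr ⟨1, 0, by rw [map_neg, map_one]; ring⟩
  · rintro p (rfl | rfl)
    · exact Ideal.mem_span_pair.mpr ⟨0, 1, by rw [map_neg, map_one]; ring⟩
    · exact Ideal.mem_span_pair.mpr ⟨-1, X 0, by rw [map_neg, map_one]; ring⟩

noncomputable def g3 (t : ℕ × ℕ × ℕ) : MvPolynomial (Fin 2) ℝ :=
  pu ^ t.1 * pv ^ t.2.1 * pw ^ t.2.2

def Sk (k : ℕ) : Finset (ℕ × ℕ × ℕ) :=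
  (Finset.range (k / 2 + 1)).biUnion fun α =>
    {(k - α, k - α, α), (k - α, α, k - α), (α, k - α, k - α)}

lemma mem_Sk (k : ℕ) (t : ℕ × ℕ × ℕ) : t ∈ Sk k ↔ inIk k t := by
  simp [Sk, inIk, Nat.lt_succ_iff]

noncomputable def reprIdeal (k : ℕ) : Ideal (MvPolynomial (Fin 2) ℝ) where
  carrier := {x | ∃ c : ℕ × ℕ × ℕ → MvPolynomial (Fin 2) ℝ, x = ∑ t ∈ Sk k, c t * g3 t}
  add_mem' := by
    rintro x y ⟨c, rfl⟩ ⟨c', rfl⟩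
    exact ⟨c + c', by rw [← Finset.sum_add_distrib]; simp [add_mul]⟩
  zero_mem' := ⟨0, by simp⟩
  smul_mem' := by
    rintro r x ⟨c, rfl⟩
    exact ⟨fun t => r * c t, by rw [smul_eq_mul, Finset.mul_sum]; simp [mul_assoc]⟩

lemma pow_sub_mul {x : MvPolynomial (Fin 2) ℝ} {a b : ℕ} (h : b ≤ a) :
    x ^ (a - b) * x ^ b = x ^ a := by
  rw [← pow_add]; congr 1; omega

lemma spanM_le_reprIdeal (k : ℕ) : spanM k ≤ reprIdeal k := by
  rw [spanM, Ideal.span_le]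
  rintro p ⟨i, j, l, h1, h2, h3, rfl⟩
  obtain ⟨α, hα, hc⟩ := exists_gen k i j l h1 h2 h3
  have key : ∀ t₀ : ℕ × ℕ × ℕ, t₀ ∈ Sk k → ∀ q : MvPolynomial (Fin 2) ℝ,
      q * g3 t₀ = pu ^ i * pv ^ j * pw ^ l →
      (pu ^ i * pv ^ j * pw ^ l : MvPolynomial (Fin 2) ℝ) ∈ reprIdeal k := by
    intro t₀ ht₀ q hq
    refine ⟨fun t => if t = t₀ then q else 0, ?_⟩
    rw [Finset.sum_congr rfl (fun t _ => by
      rw [show (if t = t₀ then q else 0) * g3 t = if t = t₀ then q * g3 t₀ else 0 by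
        split <;> simp_all])]
    rw [Finset.sum_ite_eq' (Sk k) t₀ (fun _ => q * g3 t₀), if_pos ht₀, hq]
  rcases hc with ⟨ha1, ha2, ha3⟩ | ⟨ha1, ha2, ha3⟩ | ⟨ha1, ha2, ha3⟩
  · refine key (k - α, k - α, α) ((mem_Sk k _).mpr ⟨α, hα, Or.inl rfl⟩)
      (pu ^ (i - (k - α)) * pv ^ (j - (k - α)) * pw ^ (l - α)) ?_
    rw [g3, show (pu ^ (i - (k - α)) * pv ^ (j - (k - α)) * pw ^ (l - α)) *
        (pu ^ (k - α) * pv ^ (k - α) * pw ^ α) =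
        (pu ^ (i - (k - α)) * pu ^ (k - α)) * (pv ^ (j - (k - α)) * pv ^ (k - α)) *
        (pw ^ (l - α) * pw ^ α) by ring,
      pow_sub_mul ha1, pow_sub_mul ha2, pow_sub_mul ha3]
  · refine key (k - α, α, k - α) ((mem_Sk k _).mpr ⟨α, hα, Or.inr (Or.inl rfl)⟩)
      (pu ^ (i - (k - α)) * pv ^ (j - α) * pw ^ (l - (k - α))) ?_
    rw [g3, show (pu ^ (i - (k - α)) * pv ^ (j - α) * pw ^ (l - (k - α))) *
        (pu ^ (k - α) * pv ^ α * pw ^ (k - α)) =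
        (pu ^ (i - (k - α)) * pu ^ (k - α)) * (pv ^ (j - α) * pv ^ α) *
        (pw ^ (l - (k - α)) * pw ^ (k - α)) by ring,
      pow_sub_mul ha1, pow_sub_mul ha2, pow_sub_mul ha3]
  · refine key (α, k - α, k - α) ((mem_Sk k _).mpr ⟨α, hα, Or.inr (Or.inr rfl)⟩)
      (pu ^ (i - α) * pv ^ (j - (k - α)) * pw ^ (l - (k - α))) ?_
    rw [g3, show (pu ^ (i - α) * pv ^ (j - (k - α)) * pw ^ (l - (k - α))) *
        (pu ^ α * pv ^ (k - α) * pw ^ (k - α)) =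
        (pu ^ (i - α) * pu ^ α) * (pv ^ (j - (k - α)) * pv ^ (k - α)) *
        (pw ^ (l - (k - α)) * pw ^ (k - α)) by ring,
      pow_sub_mul ha1, pow_sub_mul ha2, pow_sub_mul ha3]

lemma g3_mem_spanM {k : ℕ} {t : ℕ × ℕ × ℕ} (ht : inIk k t) : g3 t ∈ spanM k := by
  obtain ⟨α, hα, hc⟩ := ht
  rcases hc with rfl | rfl | rfl
  · exact Ideal.subset_span ⟨k - α, k - α, α, by omega, by omega, by omega, rfl⟩
  · exact Ideal.subset_span ⟨k - α, α, k - α, by omega, by omega, by omega, rfl⟩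
  · exact Ideal.subset_span ⟨α, k - α, k - α, by omega, by omega, by omega, rfl⟩

lemma Bs_eq_g3 (α β γ : ℕ) :
    Bs α β γ = C ((1 / 2 : ℝ) ^ (α + β + γ)) * g3 (α, β, γ) := by
  rw [Bs, g3, mul_pow, mul_pow, mul_pow, ← map_pow, ← map_pow, ← map_pow,
    pow_add, pow_add, map_mul, map_mul]
  ring

lemma eval1_Bs (α β γ : ℕ) : eval (fun _ => (1 : ℝ)) (Bs α β γ) = 1 := by
  simp [Bs]
  norm_num

end Aux

/-- Theorem C (algebraic form): a bivariate polynomial `a` with `a(1,1) = 4` satisfies the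
zero condition of order `k` iff `a = Σ c_{α,β,γ} · 4 · B#_{α,β,γ}`, summed over the box
spline symbols in `I_k`, with `Σ c_{α,β,γ}(1,1) = 1`. -/
theorem stmt_13 (k : ℕ) (hk : 1 ≤ k) (a : MvPolynomial (Fin 2) ℝ)
    (h1 : eval (fun _ => (1 : ℝ)) a = 4) :
    (∀ n m : ℕ, n + m < k →
      ∀ ε ∈ ({![-1, -1], ![-1, 1], ![1, -1]} : Set (Fin 2 → ℝ)),
        eval ε (Dnm n m a) = 0) ↔
    ∃ (S : Finset (ℕ × ℕ × ℕ)) (c : ℕ × ℕ × ℕ → MvPolynomial (Fin 2) ℝ),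
      (∀ t, t ∈ S ↔ inIk k t) ∧
      a = ∑ t ∈ S, c t * 4 * Bs t.1 t.2.1 t.2.2 ∧
      (∑ t ∈ S, eval (fun _ => (1 : ℝ)) (c t)) = 1 := by
  have hZk : (∀ n m : ℕ, n + m < k →
      ∀ ε ∈ ({![-1, -1], ![-1, 1], ![1, -1]} : Set (Fin 2 → ℝ)),
        eval ε (Dnm n m a) = 0) ↔ a ∈ spanM k := by
    rw [← inter_eq_spanM]
    constructor
    · intro h
      refine ⟨⟨?_, ?_⟩, ?_⟩
      · have := (Zk_point k ![-1, -1] a).mp (fun n m hnm => h n m hnm _ (by simp))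
        rwa [show ((![-1, -1] : Fin 2 → ℝ)) 0 = -1 from rfl,
          show ((![-1, -1] : Fin 2 → ℝ)) 1 = -1 from rfl, e1] at this
      · have := (Zk_point k ![-1, 1] a).mp (fun n m hnm => h n m hnm _ (by simp))
        rwa [show ((![-1, 1] : Fin 2 → ℝ)) 0 = -1 from rfl,
          show ((![-1, 1] : Fin 2 → ℝ)) 1 = 1 from rfl, e2] at this
      · have := (Zk_point k ![1, -1] a).mp (fun n m hnm => h n m hnm _ (by simp))
        rwa [show ((![1, -1] : Fin 2 → ℝ)) 0 = 1 from rfl,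
          show ((![1, -1] : Fin 2 → ℝ)) 1 = -1 from rfl, e3] at this
    · rintro ⟨⟨hm1, hm2⟩, hm3⟩ n m hnm ε hε
      simp only [Set.mem_insert_iff, Set.mem_singleton_iff] at hε
      rcases hε with rfl | rfl | rfl
      · exact (Zk_point k ![-1, -1] a).mpr (by
          rwa [show ((![-1, -1] : Fin 2 → ℝ)) 0 = -1 from rfl,
            show ((![-1, -1] : Fin 2 → ℝ)) 1 = -1 from rfl, e1]) n m hnm
      · exact (Zk_point k ![-1, 1] a).mpr (by
          rwa [show ((![-1, 1] : Fin 2 → ℝ)) 0 = -1 from rfl,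
            show ((![-1, 1] : Fin 2 → ℝ)) 1 = 1 from rfl, e2]) n m hnm
      · exact (Zk_point k ![1, -1] a).mpr (by
          rwa [show ((![1, -1] : Fin 2 → ℝ)) 0 = 1 from rfl,
            show ((![1, -1] : Fin 2 → ℝ)) 1 = -1 from rfl, e3]) n m hnm
  rw [hZk]
  constructor
  · intro ha
    obtain ⟨c', hc'⟩ := spanM_le_reprIdeal k ha
    have hterm : ∀ t : ℕ × ℕ × ℕ,
        (c' t * C ((2 : ℝ) ^ (t.1 + t.2.1 + t.2.2) / 4)) * 4 * Bs t.1 t.2.1 t.2.2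
          = c' t * g3 t := by
      intro t
      rw [Bs_eq_g3, show g3 (t.1, t.2.1, t.2.2) = g3 t from rfl,
        show (4 : MvPolynomial (Fin 2) ℝ) = C (4 : ℝ) from (map_ofNat C 4).symm]
      have hone : C ((2 : ℝ) ^ (t.1 + t.2.1 + t.2.2) / 4) * C (4 : ℝ) *
          C ((1 / 2 : ℝ) ^ (t.1 + t.2.1 + t.2.2)) = (1 : MvPolynomial (Fin 2) ℝ) := by
        rw [← map_mul, ← map_mul, ← C_1]
        congr 1
        have h2 : (2 : ℝ) ^ (t.1 + t.2.1 + t.2.2) * (1 / 2 : ℝ) ^ (t.1 + t.2.1 + t.2.2)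
            = 1 := by
          rw [← mul_pow]; norm_num
        calc (2 : ℝ) ^ (t.1 + t.2.1 + t.2.2) / 4 * 4 * (1 / 2) ^ (t.1 + t.2.1 + t.2.2)
            = (2 : ℝ) ^ (t.1 + t.2.1 + t.2.2) * (1 / 2) ^ (t.1 + t.2.1 + t.2.2) := by ring
          _ = 1 := h2
      calc c' t * C ((2 : ℝ) ^ (t.1 + t.2.1 + t.2.2) / 4) * C (4 : ℝ) *
            (C ((1 / 2 : ℝ) ^ (t.1 + t.2.1 + t.2.2)) * g3 t)
          = c' t * g3 t * (C ((2 : ℝ) ^ (t.1 + t.2.1 + t.2.2) / 4) * C (4 : ℝ) *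
            C ((1 / 2 : ℝ) ^ (t.1 + t.2.1 + t.2.2))) := by ring
        _ = c' t * g3 t := by rw [hone, mul_one]
    refine ⟨Sk k, fun t => c' t * C ((2 : ℝ) ^ (t.1 + t.2.1 + t.2.2) / 4),
      fun t => mem_Sk k t, ?_, ?_⟩
    · rw [hc']
      exact Finset.sum_congr rfl fun t _ => (hterm t).symm
    · -- sum of evaluations equals 1
      have haeq : a = ∑ t ∈ Sk k, (fun t => c' t * C ((2 : ℝ) ^ (t.1 + t.2.1 + t.2.2) / 4)) t
          * 4 * Bs t.1 t.2.1 t.2.2 := by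
        rw [hc']
        exact Finset.sum_congr rfl fun t _ => (hterm t).symm
      have h4 : (4 : ℝ) = (∑ t ∈ Sk k, eval (fun _ => (1 : ℝ))
          (c' t * C ((2 : ℝ) ^ (t.1 + t.2.1 + t.2.2) / 4))) * 4 := by
        calc (4 : ℝ) = eval (fun _ => (1 : ℝ)) a := h1.symm
          _ = ∑ t ∈ Sk k, eval (fun _ => (1 : ℝ))
              (c' t * C ((2 : ℝ) ^ (t.1 + t.2.1 + t.2.2) / 4) * 4 * Bs t.1 t.2.1 t.2.2) := by
            rw [haeq, map_sum]
          _ = ∑ t ∈ Sk k, eval (fun _ => (1 : ℝ))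
              (c' t * C ((2 : ℝ) ^ (t.1 + t.2.1 + t.2.2) / 4)) * 4 := by
            refine Finset.sum_congr rfl fun t _ => ?_
            rw [map_mul, map_mul, eval1_Bs, mul_one,
              show eval (fun _ => (1:ℝ)) (4 : MvPolynomial (Fin 2) ℝ) = 4 by
                rw [show (4 : MvPolynomial (Fin 2) ℝ) = C (4:ℝ) from (map_ofNat C 4).symm, eval_C]]
          _ = (∑ t ∈ Sk k, eval (fun _ => (1 : ℝ))
              (c' t * C ((2 : ℝ) ^ (t.1 + t.2.1 + t.2.2) / 4))) * 4 := by
            rw [Finset.sum_mul]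
      linarith
  · rintro ⟨S, c, hS, ha, hsum⟩
    rw [ha]
    apply Ideal.sum_mem
    intro t ht
    have hmem : g3 t ∈ spanM k := g3_mem_spanM ((hS t).mp ht)
    have : c t * 4 * Bs t.1 t.2.1 t.2.2
        = (c t * 4 * C ((1 / 2 : ℝ) ^ (t.1 + t.2.1 + t.2.2))) * g3 t := by
      rw [Bs_eq_g3, show g3 (t.1, t.2.1, t.2.2) = g3 t from rfl]; ring
    rw [this]
    exact Ideal.mul_mem_left _ _ hmem
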